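/- If a CW complex X is locally less than κ, for κ an uncountable regular cardinal, then every point of X has a connected open neighbourhood whose closure is contained in a connected subcomplex with fewer than κ many cells. -/

import Mathlib

open Set Metric Topology

/-- Eventual domination of functions `ℕ → ℕ`. -/
def EvDom (f g : ℕ → ℕ) : Prop := ∀ᶠ n in Filter.atTop, f n ≤ g n

/-- The bounding number `𝔟`: the least cardinality of a family of functions `ℕ → ℕ`
unbounded with respect to eventual domination. -/
noncomputable def boundingNumber : Cardinal :=
  sInf {c : Cardinal | ∃ F : Set (ℕ → ℕ), Cardinal.mk F = c ∧
    ∀ g : ℕ → ℕ, ∃ f ∈ F, ¬ EvDom f g}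

/-- A cell decomposition of a Hausdorff space: characteristic maps from closed discs,
restricting to homeomorphisms onto their images on the open discs, with the open cells
partitioning the space, satisfying closure-finiteness. -/
structure CellStruct (X : Type) [TopologicalSpace X] where
  ι : Type
  dim : ι → ℕ
  map : (i : ι) → EuclideanSpace ℝ (Fin (dim i)) → X
  continuousOn : ∀ i, ContinuousOn (map i) (closedBall 0 1)
  isEmbedding : ∀ i, IsEmbedding ((ball (0 : EuclideanSpace ℝ (Fin (dim i))) 1).restrict (map i))
  pairwiseDisjoint :
    Pairwise fun i j => Disjoint (map i '' ball 0 1) (map j '' ball 0 1)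
  iUnion_eq : ⋃ i, map i '' ball 0 1 = univ
  closureFinite : ∀ i, ∃ F : Finset ι, (∀ j ∈ F, dim j < dim i) ∧
    map i '' sphere 0 1 ⊆ ⋃ j ∈ F, map j '' ball 0 1

namespace CellStruct

variable {X : Type} [TopologicalSpace X]

/-- The open cell with index `i`. -/
def openCell (C : CellStruct X) (i : C.ι) : Set X := C.map i '' ball 0 1

/-- The closed cell with index `i`. -/
def closedCell (C : CellStruct X) (i : C.ι) : Set X := C.map i '' closedBall 0 1

/-- The image of the boundary sphere of the cell with index `i`. -/
def sphereImage (C : CellStruct X) (i : C.ι) : Set X := C.map i '' sphere 0 1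

/-- The cell structure has the weak topology: a set is closed iff its intersection with
every closed cell is closed. -/
def HasWeakTopology (C : CellStruct X) : Prop :=
  ∀ A : Set X, IsClosed A ↔ ∀ i, IsClosed (A ∩ C.closedCell i)

end CellStruct

/-- A CW structure on a (Hausdorff) space: a cell decomposition with closure-finiteness,
such that the topology is the weak topology determined by the closed cells. -/
structure CWStruct (X : Type) [TopologicalSpace X] extends CellStruct X where
  weakTopology : toCellStruct.HasWeakTopology

namespace CWStruct

variable {X : Type} [TopologicalSpace X]

/-- A subcomplex: a union of open cells containing the closure of each of its cells. -/
def IsSubcomplex (C : CWStruct X) (A : Set X) : Prop :=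
  (∃ J : Set C.ι, A = ⋃ j ∈ J, C.openCell j) ∧
    ∀ i, C.openCell i ⊆ A → C.closedCell i ⊆ A

/-- The set of (indices of) cells of a subcomplex `A`. -/
def cells (C : CWStruct X) (A : Set X) : Set C.ι := {i | C.openCell i ⊆ A}

/-- `X` is locally less than `κ`: every point is in the interior of a subcomplex
with fewer than `κ` many cells. -/
def LocallyLT (C : CWStruct X) (κ : Cardinal) : Prop :=
  ∀ x : X, ∃ A : Set X, C.IsSubcomplex A ∧ Cardinal.mk (C.cells A) < κ ∧ x ∈ interior A

/-- Locally finite: every point is in the interior of a finite subcomplex. -/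
def LocallyFinite (C : CWStruct X) : Prop := C.LocallyLT Cardinal.aleph0

/-- Locally countable: every point is in the interior of a countable subcomplex. -/
def LocallyCountable (C : CWStruct X) : Prop := C.LocallyLT (Cardinal.aleph 1)

end CWStruct

/-- `E` is a CW structure on `X × Y` (with the product topology) whose cells are
exactly the products of cells of `C` and `D`, with the corresponding dimensions.
The existence of such an `E` expresses that the product topology on `X × Y`
makes it a CW complex with the product cell structure. -/
def IsProductCWStruct {X Y : Type} [TopologicalSpace X] [TopologicalSpace Y]
    (C : CWStruct X) (D : CWStruct Y) (E : CWStruct (X × Y)) : Prop :=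
  (∀ k : E.ι, ∃ (a : C.ι) (b : D.ι),
      E.openCell k = C.openCell a ×ˢ D.openCell b ∧ E.dim k = C.dim a + D.dim b) ∧
  (∀ (a : C.ι) (b : D.ι), ∃ k : E.ι, E.openCell k = C.openCell a ×ˢ D.openCell b)

/-- A space is compactly generated: a set is closed whenever its intersection with
every compact subset is closed in the subspace topology. -/
def IsKSpace (X : Type) [TopologicalSpace X] : Prop :=
  ∀ A : Set X, (∀ K : Set X, IsCompact K → IsClosed ((Subtype.val ⁻¹' A : Set K))) → IsClosed A

namespace CWStruct

variable {X : Type} [TopologicalSpace X]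

/-- The collar neighbourhood `C^e_n(U)` inside the closed cell `e`:
the image of `{t • z : t ∈ (n/(n+1), 1], z ∈ Sᵈ, φ_e z ∈ U}` under `φ_e`. -/
noncomputable def collar (C : CWStruct X) (e : C.ι) (n : ℕ) (U : Set X) : Set X :=
  C.map e '' {p | ∃ t ∈ Set.Ioc ((n : ℝ) / (n + 1)) 1,
    ∃ z : EuclideanSpace ℝ (Fin (C.dim e)), ‖z‖ = 1 ∧ C.map e z ∈ U ∧ p = t • z}

/-- The basic neighbourhood `B_n(x)` of `x = φ_{i₀} z` inside its open cell: the image of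
the open ball about `z` of radius `min (1/(n+1)) ((1 - ‖z‖)/2)`. -/
noncomputable def ballNbhd (C : CWStruct X) (i₀ : C.ι)
    (z : EuclideanSpace ℝ (Fin (C.dim i₀))) (n : ℕ) : Set X :=
  C.map i₀ '' Metric.ball z (min (1 / (n + 1)) ((1 - ‖z‖) / 2))

open Classical in
/-- The part of the neighbourhood `U_f(x)` lying in the `n`-skeleton, defined by recursion
on dimension: start with `B_{f i₀}(x)` in dimension `dim i₀` (with the empty set in every
other cell of dimension at most `dim i₀`), and extend through each cell of each higher
dimension by the collar neighbourhoods `C^e_{f e}(·)`. -/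
noncomputable def nbhdSkel (C : CWStruct X) (i₀ : C.ι)
    (z : EuclideanSpace ℝ (Fin (C.dim i₀))) (f : C.ι → ℕ) : ℕ → Set X
  | 0 => if C.dim i₀ = 0 then C.ballNbhd i₀ z (f i₀) else ∅
  | n + 1 =>
      (if C.dim i₀ = n + 1 then C.ballNbhd i₀ z (f i₀) else ∅) ∪
      C.nbhdSkel i₀ z f n ∪
      ⋃ e : C.ι, if C.dim e = n + 1 then C.collar e (f e) (C.nbhdSkel i₀ z f n) else ∅

/-- The open neighbourhood `U_f(x)` of `x = φ_{i₀} z` determined by `f : ι → ℕ`. -/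
noncomputable def nbhd (C : CWStruct X) (i₀ : C.ι)
    (z : EuclideanSpace ℝ (Fin (C.dim i₀))) (f : C.ι → ℕ) : Set X :=
  ⋃ n, C.nbhdSkel i₀ z f n

end CWStruct

/-! ### Auxiliary lemmas -/

section AuxConvex

variable {E : Type*} [NormedAddCommGroup E] [NormedSpace ℝ E]

/-- A convex subset of a real normed space is locally connected. -/
theorem Convex.locallyConnectedSpace {s : Set E} (hs : Convex ℝ s) :
    LocallyConnectedSpace s := by
  apply locallyConnectedSpace_of_connected_bases
    (fun (x : s) (r : ℝ) => (Subtype.val ⁻¹' Metric.ball (x : E) r : Set s))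
    (fun _ r => 0 < r)
  · intro x
    rw [nhds_subtype]
    exact Metric.nhds_basis_ball.comap _
  · intro x r _
    have h1 : IsPreconnected ((Subtype.val : s → E) ''
        ((Subtype.val : s → E) ⁻¹' Metric.ball (x : E) r)) := by
      rw [Subtype.image_preimage_coe]
      exact (hs.inter (convex_ball (x : E) r)).isPreconnected
    exact IsInducing.subtypeVal.isPreconnected_image.mp h1

end AuxConvex

/-- Quotients of locally connected spaces are locally connected. -/
theorem Topology.IsQuotientMap.locallyConnectedSpace' {α β : Type*} [TopologicalSpace α]
    [TopologicalSpace β] [LocallyConnectedSpace α] {f : α → β} (hf : Topology.IsQuotientMap f) :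
    LocallyConnectedSpace β := by
  rw [locallyConnectedSpace_iff_connectedComponentIn_open]
  intro U hU y hy
  rw [← hf.isOpen_preimage]
  have key : f ⁻¹' connectedComponentIn U y =
      ⋃ z ∈ f ⁻¹' connectedComponentIn U y, connectedComponentIn (f ⁻¹' U) z := by
    apply Set.Subset.antisymm
    · intro z hz
      have hzU : z ∈ f ⁻¹' U := (connectedComponentIn_subset U y) hz
      exact Set.mem_biUnion hz (mem_connectedComponentIn hzU)
    · intro w hw
      obtain ⟨z, hz, hwz⟩ := Set.mem_iUnion₂.mp hw
      have hzU : z ∈ f ⁻¹' U := (connectedComponentIn_subset U y) hz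
      have h1 : IsPreconnected (f '' connectedComponentIn (f ⁻¹' U) z) :=
        isPreconnected_connectedComponentIn.image f hf.continuous.continuousOn
      have h2 : f '' connectedComponentIn (f ⁻¹' U) z ⊆ connectedComponentIn U (f z) := by
        refine h1.subset_connectedComponentIn ⟨z, mem_connectedComponentIn hzU, rfl⟩ ?_
        rw [Set.image_subset_iff]
        exact connectedComponentIn_subset _ _
      have hz' : f z ∈ connectedComponentIn U y := hz
      rw [← connectedComponentIn_eq hz'] at h2
      exact h2 ⟨w, hwz, rfl⟩
  rw [key]
  exact isOpen_biUnion fun z _ => (hU.preimage hf.continuous).connectedComponentIn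

namespace CellStruct

variable {X : Type} [TopologicalSpace X] (C : CellStruct X)

lemma isCompact_closedCell (i : C.ι) : IsCompact (C.closedCell i) :=
  (isCompact_closedBall 0 1).image_of_continuousOn (C.continuousOn i)

lemma isCompact_sphereImage (i : C.ι) : IsCompact (C.sphereImage i) :=
  (isCompact_sphere 0 1).image_of_continuousOn
    ((C.continuousOn i).mono sphere_subset_closedBall)

lemma closedCell_eq_union (i : C.ι) :
    C.closedCell i = C.openCell i ∪ C.sphereImage i := by
  rw [openCell, sphereImage, closedCell, ← Set.image_union, ball_union_sphere]

lemma openCell_subset_closedCell (i : C.ι) : C.openCell i ⊆ C.closedCell i :=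
  Set.image_mono ball_subset_closedBall

lemma openCell_nonempty (i : C.ι) : (C.openCell i).Nonempty :=
  ⟨C.map i 0, 0, mem_ball_self one_pos, rfl⟩

lemma eq_of_openCell_inter {i j : C.ι} (h : (C.openCell i ∩ C.openCell j).Nonempty) :
    i = j := by
  by_contra hne
  exact (Set.not_disjoint_iff_nonempty_inter.mpr h) (C.pairwiseDisjoint hne)

lemma exists_mem_openCell (x : X) : ∃ i, x ∈ C.openCell i := by
  have : x ∈ ⋃ i, C.map i '' ball 0 1 := by rw [C.iUnion_eq]; trivial
  exact Set.mem_iUnion.mp this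

lemma isPreconnected_closedCell (i : C.ι) : IsPreconnected (C.closedCell i) :=
  (convex_closedBall (0 : EuclideanSpace ℝ (Fin (C.dim i))) 1).isPreconnected.image
    _ (C.continuousOn i)

end CellStruct

namespace CWStruct

variable {X : Type} [TopologicalSpace X] [T2Space X]

lemma isClosed_closedCell (C : CWStruct X) (i : C.ι) : IsClosed (C.closedCell i) :=
  (C.isCompact_closedCell i).isClosed

lemma isClosed_sphereImage (C : CWStruct X) (i : C.ι) : IsClosed (C.sphereImage i) :=
  (C.isCompact_sphereImage i).isClosed

/-- Each closed cell, as a subspace, is locally connected: it is a compact Hausdorff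
quotient of a closed ball. -/
lemma locallyConnectedSpace_closedCell (C : CWStruct X) (i : C.ι) :
    LocallyConnectedSpace (C.closedCell i) := by
  haveI : CompactSpace (closedBall (0 : EuclideanSpace ℝ (Fin (C.dim i))) 1) :=
    isCompact_iff_compactSpace.mp (isCompact_closedBall 0 1)
  haveI : LocallyConnectedSpace (closedBall (0 : EuclideanSpace ℝ (Fin (C.dim i))) 1) :=
    (convex_closedBall (0 : EuclideanSpace ℝ (Fin (C.dim i))) 1).locallyConnectedSpace
  set g : closedBall (0 : EuclideanSpace ℝ (Fin (C.dim i))) 1 → C.closedCell i :=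
    fun p => ⟨C.map i p.1, Set.mem_image_of_mem _ p.2⟩ with hg_def
  have hgc : Continuous g := by
    apply Continuous.subtype_mk
    exact continuousOn_iff_continuous_restrict.mp (C.continuousOn i)
  have hgs : Function.Surjective g := by
    rintro ⟨y, p, hp, rfl⟩
    exact ⟨⟨p, hp⟩, rfl⟩
  exact (hgc.isClosedMap.isQuotientMap hgc hgs).locallyConnectedSpace'

/-- Connected components of open sets in a CW complex are open. -/
lemma isOpen_connectedComponentIn (C : CWStruct X) {V : Set X} (hV : IsOpen V) (x : X) :
    IsOpen (connectedComponentIn V x) := by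
  by_cases hx : x ∈ V
  · set W := connectedComponentIn V x with hW
    rw [← isClosed_compl_iff]
    refine (C.weakTopology Wᶜ).mpr fun i => ?_
    haveI := C.locallyConnectedSpace_closedCell i
    haveI : CompactSpace (C.closedCell i) :=
      isCompact_iff_compactSpace.mp (C.isCompact_closedCell i)
    have hopen : IsOpen ((Subtype.val : C.closedCell i → X) ⁻¹' W) := by
      rw [isOpen_iff_mem_nhds]
      intro z hz
      have hzW : (z : X) ∈ W := hz
      have hzV : (z : X) ∈ V := connectedComponentIn_subset V x hzW
      have h1 : IsOpen ((Subtype.val : C.closedCell i → X) ⁻¹' V) :=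
        hV.preimage continuous_subtype_val
      have hzV' : z ∈ (Subtype.val : C.closedCell i → X) ⁻¹' V := hzV
      have hsub : connectedComponentIn ((Subtype.val : C.closedCell i → X) ⁻¹' V) z ⊆
          (Subtype.val : C.closedCell i → X) ⁻¹' W := by
        have hpre : IsPreconnected ((Subtype.val : C.closedCell i → X) ''
            connectedComponentIn ((Subtype.val : C.closedCell i → X) ⁻¹' V) z) :=
          isPreconnected_connectedComponentIn.image _ continuous_subtype_val.continuousOn
        have h2 := hpre.subset_connectedComponentIn (x := (z : X)) (F := V)
          ⟨z, mem_connectedComponentIn hzV', rfl⟩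
          (by rintro _ ⟨w, hw, rfl⟩
              exact (connectedComponentIn_subset (Subtype.val ⁻¹' V) z) hw)
        have hzW' : (z : X) ∈ connectedComponentIn V x := hzW
        rw [← connectedComponentIn_eq hzW'] at h2
        intro w hw
        exact h2 ⟨w, hw, rfl⟩
      exact Filter.mem_of_superset
        ((h1.connectedComponentIn).mem_nhds (mem_connectedComponentIn hzV')) hsub
    have heq : Wᶜ ∩ C.closedCell i =
        Subtype.val '' (((Subtype.val : C.closedCell i → X) ⁻¹' W)ᶜ) := by
      ext y
      constructor
      · rintro ⟨hy1, hy2⟩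
        exact ⟨⟨y, hy2⟩, hy1, rfl⟩
      · rintro ⟨⟨w, hw⟩, hw1, rfl⟩
        exact ⟨hw1, hw⟩
    rw [heq]
    have hcpt : IsCompact (((Subtype.val : C.closedCell i → X) ⁻¹' W)ᶜ) :=
      (hopen.isClosed_compl).isCompact
    exact (hcpt.image continuous_subtype_val).isClosed
  · rw [connectedComponentIn_eq_empty hx]
    exact isOpen_empty

/-- Subcomplexes are closed. -/
lemma isClosed_of_isSubcomplex (C : CWStruct X) {A : Set X} (hA : C.IsSubcomplex A) : IsClosed A := by
  obtain ⟨⟨J, hJ⟩, hcl⟩ := hA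
  have hdichot : ∀ i : C.ι, C.openCell i ⊆ A ∨ A ∩ C.openCell i = ∅ := by
    intro i
    by_cases hne : (A ∩ C.openCell i).Nonempty
    · obtain ⟨y, hyA, hyi⟩ := hne
      rw [hJ] at hyA
      obtain ⟨j, hjJ, hyj⟩ := Set.mem_iUnion₂.mp hyA
      have := C.eq_of_openCell_inter ⟨y, hyi, hyj⟩
      subst this
      left
      rw [hJ]
      exact Set.subset_biUnion_of_mem hjJ
    · right
      exact Set.not_nonempty_iff_eq_empty.mp hne
  refine (C.weakTopology A).mpr fun i => ?_
  have key : ∀ n : ℕ, ∀ i : C.ι, C.dim i = n → IsClosed (A ∩ C.closedCell i) := by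
    intro n
    induction n using Nat.strong_induction_on with
    | _ n IH =>
      intro i hdim
      rcases hdichot i with hsub | hdisj
      · have : A ∩ C.closedCell i = C.closedCell i :=
          Set.inter_eq_self_of_subset_right (hcl i hsub)
        rw [this]
        exact C.isClosed_closedCell i
      · obtain ⟨F, hFdim, hFsub⟩ := C.closureFinite i
        have heq : A ∩ C.closedCell i = (⋃ j ∈ F, A ∩ C.closedCell j) ∩ C.sphereImage i := by
          rw [C.closedCell_eq_union i, Set.inter_union_distrib_left, hdisj,
            Set.empty_union]
          ext y
          constructor
          · rintro ⟨hyA, hys⟩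
            obtain ⟨j, hjF, hyj⟩ := Set.mem_iUnion₂.mp (hFsub hys)
            exact ⟨Set.mem_biUnion hjF ⟨hyA, C.openCell_subset_closedCell j hyj⟩, hys⟩
          · rintro ⟨hy1, hys⟩
            obtain ⟨j, _, hyA, _⟩ := Set.mem_iUnion₂.mp hy1
            exact ⟨hyA, hys⟩
        rw [heq]
        refine IsClosed.inter (isClosed_biUnion_finset fun j hjF => ?_)
          (C.isClosed_sphereImage i)
        exact IH (C.dim j) (hdim ▸ hFdim j hjF) j rfl
  exact key (C.dim i) i rfl

end CWStruct

open Classical in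
/-- Iteratively close up the set of cells meeting `B` under boundary cells that
actually meet the corresponding sphere images. -/
noncomputable def cellHull {X : Type} [TopologicalSpace X] (C : CWStruct X) (B : Set X) :
    ℕ → Set C.ι
  | 0 => {i | (C.openCell i ∩ B).Nonempty}
  | n + 1 => cellHull C B n ∪ ⋃ e ∈ cellHull C B n,
      {j | j ∈ (C.closureFinite e).choose ∧ (C.openCell j ∩ C.sphereImage e).Nonempty}

/-- Auxiliary connectedness lemma: attaching preconnected sets, each meeting a
preconnected core, yields a preconnected set. -/
lemma isPreconnected_union_attach {X : Type} [TopologicalSpace X] {ι' : Type*}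
    {P : Set X} (hP : IsPreconnected P) {x : X} (hx : x ∈ P) {s : Set ι'} {Q : ι' → Set X}
    (hQ : ∀ i ∈ s, IsPreconnected (Q i)) (hmeet : ∀ i ∈ s, (Q i ∩ P).Nonempty) :
    IsPreconnected (P ∪ ⋃ i ∈ s, Q i) := by
  have heq : P ∪ ⋃ i ∈ s, Q i = ⋃₀ (insert P {t | ∃ i ∈ s, t = P ∪ Q i}) := by
    ext y
    simp only [Set.mem_union, Set.mem_iUnion, Set.sUnion_insert, Set.mem_sUnion,
      Set.mem_setOf_eq]
    constructor
    · rintro (hy | ⟨i, hi, hy⟩)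
      · exact Or.inl hy
      · exact Or.inr ⟨P ∪ Q i, ⟨i, hi, rfl⟩, Or.inr hy⟩
    · rintro (hy | ⟨t, ⟨i, hi, rfl⟩, (hy | hy)⟩)
      · exact Or.inl hy
      · exact Or.inl hy
      · exact Or.inr ⟨i, hi, hy⟩
  rw [heq]
  apply isPreconnected_sUnion x
  · rintro t (rfl | ⟨i, hi, rfl⟩)
    · exact hx
    · exact Or.inl hx
  · rintro t (rfl | ⟨i, hi, rfl⟩)
    · exact hP
    · refine IsPreconnected.union' ?_ hP (hQ i hi)
      obtain ⟨y, hy1, hy2⟩ := hmeet i hi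
      exact ⟨y, hy2, hy1⟩


/-- If a CW complex is locally less than `κ` for `κ` uncountable regular, then every point
has a connected open neighbourhood whose closure lies in a connected subcomplex with fewer
than `κ` many cells. -/
theorem exists_connected_nbhd_of_locallyLT {X : Type} [TopologicalSpace X] [T2Space X]
    (κ : Cardinal) (hκ : Cardinal.aleph0 < κ) (hreg : κ.IsRegular)
    (C : CWStruct X) (h : C.LocallyLT κ) (x : X) :
    ∃ U A : Set X, IsOpen U ∧ x ∈ U ∧ IsConnected U ∧
      C.IsSubcomplex A ∧ IsConnected A ∧ Cardinal.mk (C.cells A) < κ ∧ closure U ⊆ A := by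
  classical
  obtain ⟨A₀, hA₀sub, hA₀card, hx₀⟩ := h x
  -- the open connected neighbourhood
  set V := interior A₀ with hV_def
  set U := connectedComponentIn V x with hU_def
  have hUopen : IsOpen U := C.isOpen_connectedComponentIn isOpen_interior x
  have hxU : x ∈ U := mem_connectedComponentIn hx₀
  have hUconn : IsConnected U := isConnected_connectedComponentIn_iff.mpr hx₀
  have hclU : closure U ⊆ A₀ := by
    have h1 : closure U ⊆ closure A₀ :=
      closure_mono ((connectedComponentIn_subset V x).trans interior_subset)
    rwa [(C.isClosed_of_isSubcomplex hA₀sub).closure_eq] at h1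
  -- the cell hull of `closure U`
  set S : ℕ → Set C.ι := cellHull C (closure U) with hS_def
  have hS_mono : ∀ n, S n ⊆ S (n + 1) := fun n => Set.subset_union_left
  have hS_mono' : ∀ {m n}, m ≤ n → S m ⊆ S n := by
    intro m n hmn
    induction n with
    | zero => rw [Nat.le_zero.mp hmn]
    | succ n IH =>
      rcases Nat.lt_or_ge m (n + 1) with hlt | hge
      · exact (IH (Nat.lt_succ_iff.mp hlt)).trans (hS_mono n)
      · rw [Nat.le_antisymm hmn hge]
  set Sinf : Set C.ι := ⋃ n, S n with hSinf_def
  set A : Set X := ⋃ j ∈ Sinf, C.openCell j with hA_def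
  -- membership facts
  obtain ⟨J₀, hJ₀⟩ := hA₀sub.1
  have hS0_sub : S 0 ⊆ C.cells A₀ := by
    intro i hi
    obtain ⟨y, hyi, hyU⟩ := hi
    have hyA₀ : y ∈ A₀ := hclU hyU
    rw [hJ₀] at hyA₀
    obtain ⟨j, hjJ, hyj⟩ := Set.mem_iUnion₂.mp hyA₀
    have := C.eq_of_openCell_inter ⟨y, hyi, hyj⟩
    subst this
    show C.openCell i ⊆ A₀
    rw [hJ₀]
    exact Set.subset_biUnion_of_mem hjJ
  -- cardinality of each stage
  have hcardS : ∀ n, Cardinal.mk (S n) < κ := by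
    intro n
    induction n with
    | zero => exact lt_of_le_of_lt (Cardinal.mk_le_mk_of_subset hS0_sub) hA₀card
    | succ n IH =>
      have h1 : Cardinal.mk (⋃ e ∈ S n,
          {j | j ∈ (C.closureFinite e).choose ∧
            (C.openCell j ∩ C.sphereImage e).Nonempty} : Set C.ι) < κ := by
        refine lt_of_le_of_lt (Cardinal.mk_biUnion_le _ _) ?_
        refine Cardinal.mul_lt_of_lt hreg.aleph0_le IH ?_
        refine lt_of_le_of_lt (ciSup_le' fun e => ?_) hκ
        refine Cardinal.mk_le_aleph0_iff.mpr ?_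
        have : {j | j ∈ (C.closureFinite (e : C.ι)).choose ∧
            (C.openCell j ∩ C.sphereImage (e : C.ι)).Nonempty}.Finite :=
          Set.Finite.subset (C.closureFinite (e : C.ι)).choose.finite_toSet
            fun j hj => hj.1
        exact this.countable
      calc Cardinal.mk (S (n + 1))
          ≤ Cardinal.mk (S n) + Cardinal.mk (⋃ e ∈ S n,
            {j | j ∈ (C.closureFinite e).choose ∧
              (C.openCell j ∩ C.sphereImage e).Nonempty} : Set C.ι) :=
          Cardinal.mk_union_le _ _
        _ < κ := Cardinal.add_lt_of_lt hreg.aleph0_le IH h1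
  have hcardSinf : Cardinal.mk Sinf < κ := by
    refine lt_of_le_of_lt (Cardinal.mk_iUnion_le S) ?_
    refine Cardinal.mul_lt_of_lt hreg.aleph0_le ?_ ?_
    · simpa using hκ
    · exact Cardinal.iSup_lt_of_isRegular hreg (by simpa using hκ) hcardS
  -- basic structure of `A`
  have hopen_sub_A : ∀ {i : C.ι}, i ∈ Sinf → C.openCell i ⊆ A := by
    intro i hi
    exact Set.subset_biUnion_of_mem hi
  have hmemSinf : ∀ i : C.ι, C.openCell i ⊆ A → i ∈ Sinf := by
    intro i hi
    obtain ⟨y, hy⟩ := C.openCell_nonempty i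
    have hyA : y ∈ A := hi hy
    obtain ⟨j, hjS, hyj⟩ := Set.mem_iUnion₂.mp hyA
    have := C.eq_of_openCell_inter ⟨y, hy, hyj⟩
    subst this
    exact hjS
  have hsphere_sub : ∀ {i : C.ι} {n : ℕ}, i ∈ S n → C.sphereImage i ⊆ A := by
    intro i n hi y hy
    obtain ⟨j, hjF, hyj⟩ := Set.mem_iUnion₂.mp ((C.closureFinite i).choose_spec.2 hy)
    have hjS : j ∈ S (n + 1) := by
      refine Or.inr (Set.mem_biUnion hi ⟨hjF, ⟨y, hyj, hy⟩⟩)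
    exact hopen_sub_A (Set.mem_iUnion.mpr ⟨n + 1, hjS⟩) hyj
  have hclosed_sub : ∀ {i : C.ι} {n : ℕ}, i ∈ S n → C.closedCell i ⊆ A := by
    intro i n hi
    rw [C.closedCell_eq_union i]
    exact Set.union_subset (hopen_sub_A (Set.mem_iUnion.mpr ⟨n, hi⟩)) (hsphere_sub hi)
  have hAsub : C.IsSubcomplex A := by
    refine ⟨⟨Sinf, rfl⟩, fun i hi => ?_⟩
    obtain ⟨n, hn⟩ := Set.mem_iUnion.mp (hmemSinf i hi)
    exact hclosed_sub hn
  have hclUA : closure U ⊆ A := by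
    intro y hy
    obtain ⟨j, hyj⟩ := C.exists_mem_openCell y
    have hjS : j ∈ S 0 := ⟨y, hyj, hy⟩
    exact hopen_sub_A (Set.mem_iUnion.mpr ⟨0, hjS⟩) hyj
  -- cardinality of the cells of `A`
  have hcardA : Cardinal.mk (C.cells A) < κ := by
    refine lt_of_le_of_lt (Cardinal.mk_le_mk_of_subset ?_) hcardSinf
    intro i hi
    exact hmemSinf i hi
  -- connectedness of `A`
  set T : ℕ → Set X := fun n => closure U ∪ ⋃ i ∈ S n, C.closedCell i with hT_def
  have hxT : ∀ n, x ∈ T n := fun n => Or.inl (subset_closure hxU)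
  have hTconn : ∀ n, IsPreconnected (T n) := by
    intro n
    induction n with
    | zero =>
      refine isPreconnected_union_attach hUconn.isPreconnected.closure
        (subset_closure hxU) (fun i _ => C.isPreconnected_closedCell i) ?_
      intro i hi
      obtain ⟨y, hy1, hy2⟩ := hi
      exact ⟨y, C.openCell_subset_closedCell i hy1, hy2⟩
    | succ n IH =>
      have heq : T (n + 1) = T n ∪ ⋃ i ∈ S (n + 1), C.closedCell i := by
        rw [hT_def]
        simp only
        rw [Set.union_assoc]
        congr 1
        rw [Set.union_eq_self_of_subset_left]
        exact Set.biUnion_subset_biUnion_left (hS_mono n)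
      rw [heq]
      refine isPreconnected_union_attach IH (hxT n)
        (fun i _ => C.isPreconnected_closedCell i) ?_
      intro i hi
      rcases hi with hi | hi
      · obtain ⟨y, hy⟩ := C.openCell_nonempty i
        exact ⟨y, C.openCell_subset_closedCell i hy,
          Or.inr (Set.mem_biUnion hi (C.openCell_subset_closedCell i hy))⟩
      · obtain ⟨e, heS, hjF, y, hy1, hy2⟩ := Set.mem_iUnion₂.mp hi
        refine ⟨y, C.openCell_subset_closedCell i hy1, ?_⟩
        refine Or.inr (Set.mem_biUnion heS ?_)
        rw [C.closedCell_eq_union e]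
        exact Or.inr hy2
  have hAT : A = ⋃ n, T n := by
    apply Set.Subset.antisymm
    · intro y hy
      obtain ⟨j, hjS, hyj⟩ := Set.mem_iUnion₂.mp hy
      obtain ⟨n, hn⟩ := Set.mem_iUnion.mp hjS
      exact Set.mem_iUnion.mpr ⟨n, Or.inr (Set.mem_biUnion hn
        (C.openCell_subset_closedCell j hyj))⟩
    · intro y hy
      obtain ⟨n, hn⟩ := Set.mem_iUnion.mp hy
      rcases hn with hn | hn
      · exact hclUA hn
      · obtain ⟨i, hiS, hyi⟩ := Set.mem_iUnion₂.mp hn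
        exact hclosed_sub hiS hyi
  have hAconn : IsConnected A := by
    refine ⟨⟨x, hclUA (subset_closure hxU)⟩, ?_⟩
    rw [hAT, ← Set.sUnion_range]
    apply isPreconnected_sUnion x
    · rintro t ⟨n, rfl⟩
      exact hxT n
    · rintro t ⟨n, rfl⟩
      exact hTconn n
  exact ⟨U, A, hUopen, hxU, hUconn, hAsub, hAconn, hcardA, hclUA⟩
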